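/- Fix a continuous potential A : X → ℝ and a constraint φ ∈ C⁰(X,ℝ^n), and take h ∈ φ_*(M_T). Let {φ_j} be a sequence of constraints converging uniformly to φ, and let {h_j} ⊂ ℝ^n satisfy h_j ∈ (φ_j)_*(φ_*^{-1}(h)) for each j. Then lim_{j→∞} d(h, φ_*(m_{A,φ_j}(h_j))) = 0. -/

import Mathlib

open MeasureTheory Filter Topology Metric Set

variable {X : Type*} [MetricSpace X] [CompactSpace X] [MeasurableSpace X] [BorelSpace X]

/-- The set of `T`-invariant Borel probability measures on `X`. -/
def MT (T : X → X) : Set (ProbabilityMeasure X) :=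
  {μ | (μ : Measure X).map T = (μ : Measure X)}

/-- The rotation vector `φ_*(μ)` of a measure `μ` with respect to a constraint `φ`. -/
noncomputable def rotv {n : ℕ} (φ : X → EuclideanSpace ℝ (Fin n))
    (μ : ProbabilityMeasure X) : EuclideanSpace ℝ (Fin n) :=
  ∫ x, φ x ∂(μ : Measure X)

/-- The integral of the potential `A` against a measure. -/
noncomputable def intA (A : X → ℝ) (μ : ProbabilityMeasure X) : ℝ :=
  ∫ x, A x ∂(μ : Measure X)

/-- The beta function `β_{A,φ}(h) = sup {∫ A dμ : μ ∈ M_T, φ_*(μ) = h}`. -/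
noncomputable def betaFn {n : ℕ} (T : X → X) (A : X → ℝ)
    (φ : X → EuclideanSpace ℝ (Fin n)) (h : EuclideanSpace ℝ (Fin n)) : ℝ :=
  sSup (intA A '' {μ ∈ MT T | rotv φ μ = h})

/-- The alpha function `α_{A,φ}(c) = min_{h ∈ φ_*(M_T)} (⟨c,h⟩ - β_{A,φ}(h))`. -/
noncomputable def alphaFn {n : ℕ} (T : X → X) (A : X → ℝ)
    (φ : X → EuclideanSpace ℝ (Fin n)) (c : EuclideanSpace ℝ (Fin n)) : ℝ :=
  sInf ((fun h => (inner ℝ c h : ℝ) - betaFn T A φ h) '' (rotv φ '' MT T))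

/-- The set `m_{A,φ}(h)` of `(A,h)`-maximizing measures. -/
noncomputable def mset {n : ℕ} (T : X → X) (A : X → ℝ)
    (φ : X → EuclideanSpace ℝ (Fin n)) (h : EuclideanSpace ℝ (Fin n)) :
    Set (ProbabilityMeasure X) :=
  {μ ∈ MT T | rotv φ μ = h ∧ intA A μ = betaFn T A φ h}

lemma cont_integrable {E : Type*} [NormedAddCommGroup E] [NormedSpace ℝ E]
    (f : C(X, E)) (μ : ProbabilityMeasure X) :
    Integrable f (μ : Measure X) :=
  f.continuous.integrable_of_hasCompactSupport (HasCompactSupport.of_compactSpace _)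

lemma rotv_dist_le {n : ℕ} (φ ψ : C(X, EuclideanSpace ℝ (Fin n)))
    (μ : ProbabilityMeasure X) : dist (rotv (⇑φ) μ) (rotv (⇑ψ) μ) ≤ dist φ ψ := by
  rw [dist_eq_norm, rotv, rotv, ← integral_sub (cont_integrable φ μ) (cont_integrable ψ μ)]
  calc ‖∫ x, (φ x - ψ x) ∂(μ : Measure X)‖
      ≤ ∫ x, ‖φ x - ψ x‖ ∂(μ : Measure X) := norm_integral_le_integral_norm _
    _ ≤ ∫ _x, dist φ ψ ∂(μ : Measure X) := by
        apply integral_mono_of_nonneg (Filter.Eventually.of_forall fun x => norm_nonneg _)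
          (integrable_const _)
        exact Filter.Eventually.of_forall fun x => by
          simpa [dist_eq_norm] using ContinuousMap.dist_apply_le_dist (f := φ) (g := ψ) x
    _ = dist φ ψ := by simp

/-- if `φ_j → φ` uniformly, `h ∈ φ_*(M_T)` and `h_j ∈ (φ_j)_*(φ_*^{-1}(h))`
for each `j`, then `d(h, φ_*(m_{A,φ_j}(h_j))) → 0`. -/
theorem stmt8 {n : ℕ} (T : X → X) (hT : Continuous T) (A : X → ℝ) (hA : Continuous A)
    (φ : C(X, EuclideanSpace ℝ (Fin n))) (φseq : ℕ → C(X, EuclideanSpace ℝ (Fin n)))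
    (hconv : Tendsto φseq atTop (𝓝 φ))
    (h : EuclideanSpace ℝ (Fin n)) (hh : h ∈ rotv (⇑φ) '' MT T)
    (hseq : ℕ → EuclideanSpace ℝ (Fin n))
    (hhj : ∀ j, hseq j ∈ rotv (⇑(φseq j)) '' {μ ∈ MT T | rotv (⇑φ) μ = h}) :
    Tendsto (fun j => infDist h (rotv (⇑φ) '' mset T A (⇑(φseq j)) (hseq j)))
      atTop (𝓝 0) := by
  have hd : Tendsto (fun j => dist (φseq j) φ) atTop (𝓝 0) :=
    (tendsto_iff_dist_tendsto_zero).mp hconv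
  have hbd : ∀ j, infDist h (rotv (⇑φ) '' mset T A (⇑(φseq j)) (hseq j))
      ≤ 2 * dist (φseq j) φ := by
    intro j
    rcases (rotv (⇑φ) '' mset T A (⇑(φseq j)) (hseq j)).eq_empty_or_nonempty with he | hne
    · rw [he, infDist_empty]
      positivity
    · obtain ⟨y, μ, hμ, rfl⟩ := hne
      obtain ⟨ν, ⟨hνMT, hνφ⟩, hνeq⟩ := hhj j
      refine le_trans (infDist_le_dist_of_mem ⟨μ, hμ, rfl⟩) ?_
      have h1 : dist h (hseq j) ≤ dist (φseq j) φ := by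
        rw [← hνφ, ← hνeq, dist_comm]
        exact rotv_dist_le _ _ _
      have h2 : dist (hseq j) (rotv (⇑φ) μ) ≤ dist (φseq j) φ := by
        rw [← hμ.2.1]
        exact rotv_dist_le _ _ _
      calc dist h (rotv (⇑φ) μ) ≤ dist h (hseq j) + dist (hseq j) (rotv (⇑φ) μ) :=
            dist_triangle _ _ _
        _ ≤ 2 * dist (φseq j) φ := by linarith
  exact squeeze_zero (fun j => infDist_nonneg) hbd (by simpa using hd.const_mul 2)
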